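/- The map sending an edge sequence b to the pair (charge(b), shape(b)) is a bijection from the set of edge sequences onto ℤ × (set of partitions). -/
import Mathlib


/-- An *edge sequence*: a predicate on `ℤ` (`True` = a `1`, `False` = a `0`),
eventually `1` in one direction and eventually `0` in the other. -/
def IsEdgeSeq (b : ℤ → Prop) : Prop :=
  (∃ N : ℤ, ∀ i : ℤ, N ≤ i → b i) ∧ (∃ N : ℤ, ∀ i : ℤ, i ≤ N → ¬ b i)

/-- The number of `0`'s of the edge sequence lying above position `j`. -/
noncomputable def numZerosAbove (b : ℤ → Prop) (j : ℤ) : ℕ :=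
  Nat.card {i : ℤ // j < i ∧ ¬ b i}

/-- The shape of an edge sequence, as a weakly decreasing eventually-zero function of
its parts. -/
noncomputable def esShape (b : ℤ → Prop) (k : ℕ) : ℕ :=
  Nat.card {j : ℤ // b j ∧ k + 1 ≤ numZerosAbove b j}

/-- The charge of an edge sequence: the position of the boundary after sorting the
sequence (by repeatedly swapping adjacent inversions) into the fully sorted sequence
with no inversions; normalized so that the sorted sequence consisting of all `1`'s at
positions `≥ m` has charge `-m`. -/
noncomputable def esCharge (b : ℤ → Prop) : ℤ :=
  (Nat.card {i : ℤ // i < 0 ∧ b i} : ℤ) - (Nat.card {i : ℤ // 0 ≤ i ∧ ¬ b i} : ℤ)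

/-- A function `ℕ → ℕ` is (the sequence of parts of) a partition: weakly decreasing
and eventually zero. -/
def IsPartitionFun (f : ℕ → ℕ) : Prop :=
  (∀ i j : ℕ, i ≤ j → f j ≤ f i) ∧ ∃ n : ℕ, ∀ i : ℕ, n ≤ i → f i = 0

namespace Stmt2Proof

noncomputable def mfun (z : ℕ → ℤ) (x : ℤ) : ℕ := sInf {l | z l < x}

variable {b : ℤ → Prop} {z : ℕ → ℤ} {N : ℤ}

lemma z_add_le (hz : StrictAnti z) (k l : ℕ) (h : k ≤ l) : z l + l ≤ z k + k := by
  induction l with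
  | zero => obtain rfl : k = 0 := Nat.le_zero.mp h; exact le_rfl
  | succ n ih =>
    rcases eq_or_lt_of_le h with rfl | h'
    · exact le_rfl
    · have h1 := ih (Nat.lt_succ_iff.mp h')
      have h2 : z (n + 1) < z n := hz (Nat.lt_succ_self n)
      push_cast at h1 ⊢
      omega

lemma exists_lt (hz : StrictAnti z) (x : ℤ) (k₀ : ℕ) : ∃ K : ℕ, k₀ < K ∧ z K ≤ x := by
  refine ⟨k₀ + 1 + (z 0 - x).toNat, by omega, ?_⟩
  have h1 := z_add_le hz 0 (k₀ + 1 + (z 0 - x).toNat) (by omega)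
  have h2 : z 0 - x ≤ ((z 0 - x).toNat : ℤ) := Int.self_le_toNat _
  push_cast at h1
  omega

lemma mfun_spec (hz : StrictAnti z) (x : ℤ) (l : ℕ) : z l < x ↔ mfun z x ≤ l := by
  constructor
  · intro h; exact Nat.sInf_le h
  · intro h
    have hne : {l | z l < x}.Nonempty := by
      obtain ⟨K, _, hK⟩ := exists_lt hz (x - 1) 0
      exact ⟨K, by simpa using lt_of_le_of_lt hK (by omega)⟩
    have hmem := Nat.sInf_mem hne
    exact lt_of_le_of_lt (hz.antitone h) hmem

lemma mfun_z (hz : StrictAnti z) (K : ℕ) : mfun z (z K) = K + 1 := by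
  have h1 : mfun z (z K) ≤ K + 1 := (mfun_spec hz _ _).mp (hz (Nat.lt_succ_self K))
  have h2 : ¬ mfun z (z K) ≤ K := fun h => lt_irrefl _ ((mfun_spec hz _ _).mpr h)
  omega

lemma zeros_eq (hz : StrictAnti z) (hbz : ∀ i, b i ↔ ∀ k, z k ≠ i) (c : ℤ) :
    {i : ℤ | c ≤ i ∧ ¬ b i} = z '' Set.Iio (mfun z c) := by
  ext i
  simp only [Set.mem_setOf_eq, Set.mem_image, Set.mem_Iio]
  constructor
  · rintro ⟨hci, hnb⟩
    have : ¬ ∀ k, z k ≠ i := fun h => hnb ((hbz i).mpr h)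
    push_neg at this
    obtain ⟨l, hl⟩ := this
    refine ⟨l, ?_, hl⟩
    have : ¬ z l < c := by rw [hl]; omega
    have := mt (mfun_spec hz c l).mpr this
    omega
  · rintro ⟨l, hl, rfl⟩
    have h1 : ¬ z l < c := fun h => absurd ((mfun_spec hz c l).mp h) (by omega)
    exact ⟨by omega, fun hb => (hbz (z l)).mp hb l rfl⟩

lemma zeros_card (hz : StrictAnti z) (hbz : ∀ i, b i ↔ ∀ k, z k ≠ i) (c : ℤ) :
    Nat.card {i : ℤ // c ≤ i ∧ ¬ b i} = mfun z c := by
  have h0 : Nat.card {i : ℤ // c ≤ i ∧ ¬ b i} = ({i : ℤ | c ≤ i ∧ ¬ b i}).ncard := rfl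
  rw [h0, zeros_eq hz hbz, Set.ncard_image_of_injective _ hz.injective,
    ← Finset.coe_Iio, Set.ncard_coe_finset, Nat.card_Iio]

lemma ones_eq (hz : StrictAnti z) (hbz : ∀ i, b i ↔ ∀ k, z k ≠ i)
    (hN : ∀ i ≤ N, ¬ b i) (K : ℕ) (hK : z K ≤ N) (c : ℤ) :
    {j : ℤ | b j ∧ j < c} = Set.Ico (z K) c \ (z '' Set.Ico (mfun z c) (K + 1)) := by
  ext j
  simp only [Set.mem_setOf_eq, Set.mem_diff, Set.mem_Ico, Set.mem_image, not_exists]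
  constructor
  · rintro ⟨hbj, hjc⟩
    have hKj : z K ≤ j := by
      by_contra h
      exact hN j (by omega) hbj
    exact ⟨⟨hKj, hjc⟩, fun l hl => (hbz j).mp hbj l hl.2⟩
  · rintro ⟨⟨hKj, hjc⟩, him⟩
    refine ⟨(hbz j).mpr fun l hl => ?_, hjc⟩
    have h1 : mfun z c ≤ l := (mfun_spec hz c l).mp (by omega)
    have h2 : l < K + 1 := by
      by_contra h
      have hlz : z l < z K := hz (by omega)
      omega
    exact him l ⟨⟨h1, h2⟩, hl⟩

lemma ones_card (hz : StrictAnti z) (hbz : ∀ i, b i ↔ ∀ k, z k ≠ i)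
    (hN : ∀ i ≤ N, ¬ b i) (K : ℕ) (hK : z K ≤ N) (c : ℤ)
    (hc1 : z K ≤ c) (hc2 : mfun z c ≤ K + 1) :
    (Nat.card {j : ℤ // b j ∧ j < c} : ℤ) = (c - z K) - ((K : ℤ) + 1 - (mfun z c : ℤ)) := by
  have h0 : Nat.card {j : ℤ // b j ∧ j < c} = ({j : ℤ | b j ∧ j < c}).ncard := rfl
  have hsub : z '' Set.Ico (mfun z c) (K + 1) ⊆ Set.Ico (z K) c := by
    rintro x ⟨l, ⟨hl1, hl2⟩, rfl⟩
    exact ⟨hz.antitone (by omega), (mfun_spec hz c l).mpr hl1⟩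
  have hfin : (Set.Ico (z K) c).Finite := Set.finite_Ico _ _
  have e1 : (Set.Ico (z K) c).ncard = (c - z K).toNat := by
    rw [← Finset.coe_Ico, Set.ncard_coe_finset, Int.card_Ico]
  have e2 : (z '' Set.Ico (mfun z c) (K + 1)).ncard = K + 1 - mfun z c := by
    rw [Set.ncard_image_of_injective _ hz.injective, ← Finset.coe_Ico,
      Set.ncard_coe_finset, Nat.card_Ico]
  have hle : (z '' Set.Ico (mfun z c) (K + 1)).ncard ≤ (Set.Ico (z K) c).ncard :=
    Set.ncard_le_ncard hsub hfin
  rw [h0, ones_eq hz hbz hN K hK c, Set.ncard_diff hsub (hfin.subset hsub)]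
  rw [e1, e2] at hle ⊢
  have h3 : ((c - z K).toNat : ℤ) = c - z K := Int.toNat_of_nonneg (by omega)
  omega

lemma numZerosAbove_eq (hz : StrictAnti z) (hbz : ∀ i, b i ↔ ∀ k, z k ≠ i) (j : ℤ) :
    numZerosAbove b j = mfun z (j + 1) := by
  unfold numZerosAbove
  have : ∀ i : ℤ, (j < i ∧ ¬ b i) ↔ (j + 1 ≤ i ∧ ¬ b i) := by
    intro i; constructor <;> (rintro ⟨h1, h2⟩; exact ⟨by omega, h2⟩)
  rw [Nat.card_congr (Equiv.subtypeEquivRight this)]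
  exact zeros_card hz hbz (j + 1)

lemma shape_eq (hz : StrictAnti z) (hbz : ∀ i, b i ↔ ∀ k, z k ≠ i)
    (hN : ∀ i ≤ N, ¬ b i) (k K : ℕ) (hkK : k < K) (hK : z K ≤ N) :
    (esShape b k : ℤ) = z k - z K - K + k := by
  unfold esShape
  have hcond : ∀ j : ℤ, (b j ∧ k + 1 ≤ numZerosAbove b j) ↔ (b j ∧ j < z k) := by
    intro j
    rw [numZerosAbove_eq hz hbz j]
    have : k + 1 ≤ mfun z (j + 1) ↔ j < z k := by
      constructor
      · intro h
        by_contra hle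
        push_neg at hle
        have := (mfun_spec hz (j + 1) k).mp (by omega)
        omega
      · intro h
        by_contra hle
        push_neg at hle
        have := (mfun_spec hz (j + 1) k).mpr (by omega)
        omega
    tauto
  rw [Nat.card_congr (Equiv.subtypeEquivRight hcond)]
  have h1 := ones_card hz hbz hN K hK (z k) (hz.antitone hkK.le)
    (by rw [mfun_z hz]; omega)
  rw [mfun_z hz] at h1
  push_cast at h1 ⊢
  omega

lemma charge_eq (hz : StrictAnti z) (hbz : ∀ i, b i ↔ ∀ k, z k ≠ i)
    (hN : ∀ i ≤ N, ¬ b i) (K : ℕ) (hK : z K ≤ N) (hK0 : z K < 0) :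
    esCharge b = -z K - K - 1 := by
  unfold esCharge
  have h1 : Nat.card {i : ℤ // i < 0 ∧ b i} = Nat.card {j : ℤ // b j ∧ j < 0} :=
    Nat.card_congr (Equiv.subtypeEquivRight fun i => and_comm)
  have hm : mfun z 0 ≤ K + 1 := le_of_lt (Nat.lt_succ_iff.mpr ((mfun_spec hz 0 K).mp hK0))
  have h2 := ones_card hz hbz hN K hK 0 hK0.le hm
  have h3 := zeros_card hz hbz (b := b) 0
  rw [h1, h2, h3]
  omega

lemma shape_formula (hz : StrictAnti z) (hbz : ∀ i, b i ↔ ∀ k, z k ≠ i)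
    (hN : ∀ i ≤ N, ¬ b i) (k : ℕ) :
    (esShape b k : ℤ) = z k + k + 1 + esCharge b := by
  obtain ⟨K, hkK, hK⟩ := exists_lt hz (min N (-1)) k
  have h1 := shape_eq hz hbz hN k K hkK (hK.trans (min_le_left _ _))
  have h2 := charge_eq hz hbz hN K (hK.trans (min_le_left _ _))
    (lt_of_le_of_lt (hK.trans (min_le_right _ _)) (by omega))
  omega

lemma shape_partition (hz : StrictAnti z) (hbz : ∀ i, b i ↔ ∀ k, z k ≠ i)
    (hN : ∀ i ≤ N, ¬ b i) : IsPartitionFun (esShape b) := by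
  constructor
  · intro i j hij
    have h1 := shape_formula hz hbz hN i
    have h2 := shape_formula hz hbz hN j
    have h3 := z_add_le hz i j hij
    have : (esShape b j : ℤ) ≤ (esShape b i : ℤ) := by push_cast at h3; omega
    exact_mod_cast this
  · obtain ⟨K₀, _, hK₀⟩ := exists_lt hz (min N (-1)) 0
    refine ⟨K₀, fun k hk => ?_⟩
    have hzk : z k ≤ min N (-1) := le_trans (hz.antitone hk) hK₀
    have h1 := charge_eq hz hbz hN k (hzk.trans (min_le_left _ _))
      (lt_of_le_of_lt (hzk.trans (min_le_right _ _)) (by omega))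
    have h2 := shape_formula hz hbz hN k
    have : (esShape b k : ℤ) = 0 := by omega
    exact_mod_cast this

lemma exists_zenum (hb : IsEdgeSeq b) :
    ∃ z : ℕ → ℤ, StrictAnti z ∧ ∀ i, b i ↔ ∀ k, z k ≠ i := by
  classical
  obtain ⟨⟨N₁, hN₁⟩, ⟨N₂, hN₂⟩⟩ := hb
  have key : ∀ x : ℤ, ∃ g : ℤ, (¬ b g ∧ g < x) ∧ ∀ i : ℤ, (¬ b i ∧ i < x) → i ≤ g := by
    intro x
    apply Int.exists_greatest_of_bdd
    · refine ⟨N₁, fun i hi => ?_⟩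
      by_contra h
      exact hi.1 (hN₁ i (by omega))
    · exact ⟨min N₂ (x - 1), hN₂ _ (min_le_left _ _), by omega⟩
  choose G hG1 hG2 using key
  set z : ℕ → ℤ := fun k => Nat.rec (G (N₁ + 1)) (fun _ prev => G prev) k with hzdef
  have hstep : ∀ k, z (k + 1) = G (z k) := fun k => rfl
  have hz0 : z 0 = G (N₁ + 1) := rfl
  have hznb : ∀ k, ¬ b (z k) := by
    intro k
    cases k with
    | zero => exact (hG1 _).1
    | succ n => exact (hG1 _).1
  have hanti : StrictAnti z := strictAnti_nat_of_succ_lt fun n => by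
    rw [hstep]; exact (hG1 _).2
  refine ⟨z, hanti, fun i => ⟨fun hbi k hk => hznb k (hk ▸ hbi), fun h => ?_⟩⟩
  by_contra hnb
  have hiN₁ : i < N₁ + 1 := by
    by_contra h'
    exact hnb (hN₁ i (by omega))
  have hiz0 : i ≤ z 0 := hz0 ▸ hG2 (N₁ + 1) i ⟨hnb, hiN₁⟩
  have hex : ∃ k : ℕ, z k ≤ i := by
    obtain ⟨K, _, hK⟩ := exists_lt hanti i 0
    exact ⟨K, hK⟩
  have hk1 : z (Nat.find hex) ≤ i := Nat.find_spec hex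
  rcases eq_or_lt_of_le hk1 with heq | hlt
  · exact h _ heq
  · cases hfk : Nat.find hex with
    | zero => rw [hfk] at hlt; omega
    | succ k' =>
      have hk' : ¬ z k' ≤ i := Nat.find_min hex (by omega)
      have h2 : i ≤ G (z k') := hG2 (z k') i ⟨hnb, by omega⟩
      rw [← hstep k'] at h2
      rw [hfk] at hlt
      omega

end Stmt2Proof

open Stmt2Proof in
theorem stmt2 :
    Set.BijOn (fun b : ℤ → Prop => (esCharge b, esShape b))
      {b : ℤ → Prop | IsEdgeSeq b}
      {p : ℤ × (ℕ → ℕ) | IsPartitionFun p.2} := by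
  classical
  have hmapsg : ∀ p ∈ {p : ℤ × (ℕ → ℕ) | IsPartitionFun p.2},
      IsEdgeSeq (fun i : ℤ => ∀ k : ℕ, (p.2 k : ℤ) - (k : ℤ) - 1 - p.1 ≠ i) ∧
      esCharge (fun i : ℤ => ∀ k : ℕ, (p.2 k : ℤ) - (k : ℤ) - 1 - p.1 ≠ i) = p.1 ∧
      esShape (fun i : ℤ => ∀ k : ℕ, (p.2 k : ℤ) - (k : ℤ) - 1 - p.1 ≠ i) = p.2 := by
    rintro ⟨c, f⟩ ⟨hmono, n, hn⟩
    replace hmono : ∀ i j : ℕ, i ≤ j → f j ≤ f i := hmono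
    replace hn : ∀ i : ℕ, n ≤ i → f i = 0 := hn
    set b : ℤ → Prop := fun i : ℤ => ∀ k : ℕ, (f k : ℤ) - (k : ℤ) - 1 - c ≠ i with hbdef
    set z : ℕ → ℤ := fun k => (f k : ℤ) - (k : ℤ) - 1 - c with hzdef
    have hzk : ∀ k : ℕ, z k = (f k : ℤ) - (k : ℤ) - 1 - c := fun k => rfl
    have hz : StrictAnti z := strictAnti_nat_of_succ_lt fun k => by
      have := hmono k (k + 1) (by omega)
      rw [hzk k, hzk (k + 1)]
      push_cast
      omega
    have hbz : ∀ i, b i ↔ ∀ k, z k ≠ i := fun i => Iff.rfl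
    have hN : ∀ i ≤ -(n : ℤ) - 1 - c, ¬ b i := by
      intro i hi hgi
      have hk : (((-i - 1 - c).toNat : ℤ)) = -i - 1 - c := Int.toNat_of_nonneg (by omega)
      refine hgi (-i - 1 - c).toNat ?_
      have hfn : f (-i - 1 - c).toNat = 0 := hn _ (by omega)
      rw [hfn]
      push_cast
      omega
    have hedge : IsEdgeSeq b := by
      constructor
      · refine ⟨z 0 + 1, fun i hi k hk => ?_⟩
        have h2 := z_add_le hz 0 k (Nat.zero_le k)
        have h3 : z k = i := hk
        push_cast at h2
        omega
      · exact ⟨-(n : ℤ) - 1 - c, hN⟩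
    have hcn : ((-c).toNat : ℤ) ≥ -c := Int.self_le_toNat _
    have hfK : f (n + (-c).toNat) = 0 := hn _ (by omega)
    have hK1 : z (n + (-c).toNat) ≤ -(n : ℤ) - 1 - c := by
      rw [hzk, hfK]; push_cast; omega
    have hK2 : z (n + (-c).toNat) < 0 := by
      rw [hzk, hfK]; push_cast; omega
    have hcharge : esCharge b = c := by
      have h1 := charge_eq hz hbz hN (n + (-c).toNat) hK1 hK2
      rw [h1, hzk, hfK]; push_cast; omega
    have hshape : esShape b = f := by
      funext k
      have h2 := shape_formula hz hbz hN k
      rw [hcharge, hzk k] at h2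
      have : (esShape b k : ℤ) = (f k : ℤ) := by omega
      exact_mod_cast this
    exact ⟨hedge, hcharge, hshape⟩
  have hmapsf : Set.MapsTo (fun b : ℤ → Prop => (esCharge b, esShape b))
      {b : ℤ → Prop | IsEdgeSeq b} {p : ℤ × (ℕ → ℕ) | IsPartitionFun p.2} := by
    intro b hb
    obtain ⟨z, hz, hbz⟩ := exists_zenum hb
    obtain ⟨N, hN⟩ := hb.2
    exact shape_partition hz hbz hN
  refine Set.InvOn.bijOn (f' := fun p : ℤ × (ℕ → ℕ) =>
      fun i : ℤ => ∀ k : ℕ, (p.2 k : ℤ) - (k : ℤ) - 1 - p.1 ≠ i) ⟨?_, ?_⟩ hmapsf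
    (fun p hp => (hmapsg p hp).1)
  · intro b hb
    obtain ⟨z, hz, hbz⟩ := exists_zenum hb
    obtain ⟨N, hN⟩ := hb.2
    funext i
    apply propext
    show (∀ k : ℕ, (esShape b k : ℤ) - (k : ℤ) - 1 - esCharge b ≠ i) ↔ b i
    have he : ∀ k : ℕ, (esShape b k : ℤ) - (k : ℤ) - 1 - esCharge b = z k := by
      intro k
      have := shape_formula hz hbz hN k
      omega
    simp only [he]
    exact (hbz i).symm
  · intro p hp
    obtain ⟨-, h1, h2⟩ := hmapsg p hp
    exact Prod.ext h1 h2
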